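/- (Sokhotskii-type limit on ℤ₋) Let u : ℤ → ℂ be absolutely summable with Fourier series û(t) = Σ_{k ∈ ℤ} u(k) e^{−ikt}. Then for every ξ ∈ ℝ, lim_{τ→0⁺} (1/(2π)) ∫_{−π}^{π} û(t) · [ (1 − e^{−τ} e^{i(ξ−t)})^{−1} − 1 ] dt = Σ_{k=−∞}^{−1} u(k) e^{−ikξ}; that is, the regularized integral converges, as the regularization parameter tends to zero, to the Fourier transform F(χ_{ℤ₋} · u)(ξ) of the truncation of u to the negative integers. -/

import Mathlib

open MeasureTheory Complex Real

/-- The Fourier series `û(t) = Σ_{k ∈ ℤ} u(k) e^{−ikt}` of a function of a discrete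
variable. -/
noncomputable def discreteFourier (u : ℤ → ℂ) (t : ℝ) : ℂ :=
  ∑' k : ℤ, u k * Complex.exp (-Complex.I * (k : ℂ) * (t : ℂ))

lemma myexp_int_pi (m : ℤ) : Complex.exp (Complex.I * m * (Real.pi:ℂ)) = (-1:ℂ)^m := by
  rw [show Complex.I * m * (Real.pi:ℂ) = m * ((Real.pi:ℂ) * Complex.I) by ring,
    Complex.exp_int_mul, Complex.exp_pi_mul_I]

lemma my_integral_exp_int (m : ℤ) :
    (∫ t in (-Real.pi)..Real.pi, Complex.exp (Complex.I * m * t)) =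
      if m = 0 then 2 * (Real.pi:ℂ) else 0 := by
  by_cases hm : m = 0
  · simp [hm]
    ring
  · have hc : (Complex.I * m) ≠ 0 := by
      simp [Complex.I_ne_zero, Complex.ext_iff]
      exact_mod_cast hm
    rw [if_neg hm]
    have := integral_exp_mul_complex (a := -Real.pi) (b := Real.pi) hc
    simp only [mul_assoc] at this ⊢
    rw [this]
    have h1 : Complex.exp (Complex.I * (m * (Real.pi:ℂ))) = (-1:ℂ)^m := by
      rw [← mul_assoc]; exact myexp_int_pi m
    have h2 : Complex.exp (Complex.I * (m * ((-Real.pi:ℝ):ℂ))) = ((-1:ℂ)^m)⁻¹ := by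
      push_cast
      rw [show Complex.I * ((m:ℂ) * (-(Real.pi:ℂ))) = -(Complex.I * m * (Real.pi:ℂ)) by ring,
        Complex.exp_neg, myexp_int_pi m]
    have h3 : ((-1:ℂ)^m)⁻¹ = (-1:ℂ)^m := by
      have hmm : ((-1:ℂ)^m) * ((-1:ℂ)^m) = 1 := by
        rw [← zpow_add₀ (by norm_num : (-1:ℂ) ≠ 0), show m + m = 2 * m by ring, zpow_mul]
        norm_num
      exact inv_eq_of_mul_eq_one_right hmm
    rw [h1, h2, h3, sub_self, zero_div]

lemma my_geom (w : ℂ) (hw : ‖w‖ < 1) :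
    HasSum (fun n : ℕ => w ^ (n + 1)) ((1 - w)⁻¹ - 1) := by
  have h1w : (1 : ℂ) - w ≠ 0 := by
    intro h
    rw [sub_eq_zero] at h
    rw [← h] at hw
    simp at hw
  have h := (hasSum_geometric_of_norm_lt_one hw).mul_left w
  have he : (fun n : ℕ => w * w ^ n) = fun n : ℕ => w ^ (n + 1) := by
    funext n; rw [pow_succ]; ring
  rw [he] at h
  have : w * (1 - w)⁻¹ = (1 - w)⁻¹ - 1 := by
    field_simp
    ring
  rwa [this] at h

lemma norm_term (u : ℤ → ℂ) (k : ℤ) (t : ℝ) :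
    ‖u k * Complex.exp (-Complex.I * (k : ℂ) * (t : ℂ))‖ = ‖u k‖ := by
  rw [norm_mul]
  have : -Complex.I * (k : ℂ) * (t : ℂ) = ((-(k * t) : ℝ) : ℂ) * Complex.I := by
    push_cast; ring
  rw [this, Complex.norm_exp_ofReal_mul_I, mul_one]

lemma norm_exp_I_int (k : ℤ) (t : ℝ) :
    ‖Complex.exp (-Complex.I * (k : ℂ) * (t : ℂ))‖ = 1 := by
  have : -Complex.I * (k : ℂ) * (t : ℂ) = ((-(k * t) : ℝ) : ℂ) * Complex.I := by
    push_cast; ring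
  rw [this, Complex.norm_exp_ofReal_mul_I]

lemma summable_term (u : ℤ → ℂ) (hu : Summable fun k : ℤ => ‖u k‖) (t : ℝ) :
    Summable fun k : ℤ => u k * Complex.exp (-Complex.I * (k : ℂ) * (t : ℂ)) :=
  Summable.of_norm (by simpa only [norm_term] using hu)

lemma hasSum_df (u : ℤ → ℂ) (hu : Summable fun k : ℤ => ‖u k‖) (t : ℝ) :
    HasSum (fun k : ℤ => u k * Complex.exp (-Complex.I * (k : ℂ) * (t : ℂ)))
      (discreteFourier u t) :=
  (summable_term u hu t).hasSum

lemma cont_df (u : ℤ → ℂ) (hu : Summable fun k : ℤ => ‖u k‖) :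
    Continuous (discreteFourier u) := by
  apply continuous_tsum (u := fun k => ‖u k‖) (fun k => by fun_prop) hu
  intro k t
  exact (norm_term u k t).le

set_option maxHeartbeats 1000000 in
lemma step_lemma (u : ℤ → ℂ) (hu : Summable fun k : ℤ => ‖u k‖) (ξ τ : ℝ) (hτ : 0 < τ) :
    (1 / (2 * (Real.pi : ℂ))) *
        ∫ t in (-Real.pi)..Real.pi, discreteFourier u t *
          ((1 - (Real.exp (-τ) : ℂ) * Complex.exp (Complex.I * ((ξ : ℂ) - (t : ℂ))))⁻¹ - 1)
      = ∑' n : ℕ, ((Real.exp (-τ) : ℂ)) ^ (n + 1) *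
          (u (-(n + 1)) * Complex.exp (-Complex.I * ((-((n:ℤ) + 1) : ℤ) : ℂ) * (ξ : ℂ))) := by
  set r : ℝ := Real.exp (-τ) with hr
  have hr0 : 0 < r := Real.exp_pos _
  have hr1 : r < 1 := Real.exp_lt_one_iff.mpr (by linarith)
  set w : ℝ → ℂ := fun t => (r : ℂ) * Complex.exp (Complex.I * ((ξ : ℂ) - (t : ℂ))) with hw
  have hwnorm : ∀ t : ℝ, ‖w t‖ = r := by
    intro t
    rw [hw]
    simp only [norm_mul, Complex.norm_real]
    rw [show Complex.I * ((ξ : ℂ) - (t : ℂ)) = (((ξ - t : ℝ)) : ℂ) * Complex.I by push_cast; ring,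
      Complex.norm_exp_ofReal_mul_I, mul_one, Real.norm_of_nonneg hr0.le]
  set G : ℝ → ℂ := fun t => (1 - w t)⁻¹ - 1 with hGdef
  have hG : ∀ t : ℝ, HasSum (fun n : ℕ => (w t) ^ (n + 1)) (G t) := fun t =>
    my_geom _ (by rw [hwnorm]; exact hr1)
  set F : ℤ × ℕ → ℝ → ℂ := fun p t =>
    (u p.1 * Complex.exp (-Complex.I * (p.1 : ℂ) * (t : ℂ))) * (w t) ^ (p.2 + 1) with hF
  -- pointwise double expansion
  have hgs : Summable (fun n : ℕ => r ^ (n + 1)) :=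
    ((summable_geometric_of_lt_one hr0.le hr1).mul_left r).congr
      (fun n => by rw [pow_succ]; ring)
  have hFnorm : ∀ p : ℤ × ℕ, ∀ t : ℝ, ‖F p t‖ = ‖u p.1‖ * r ^ (p.2 + 1) := by
    intro p t
    rw [hF]
    simp only [norm_mul, norm_pow, hwnorm, norm_exp_I_int, mul_one]
  have hptwise : ∀ t : ℝ, HasSum (fun p : ℤ × ℕ => F p t) (discreteFourier u t * G t) := by
    intro t
    have h2 : Summable fun p : ℤ × ℕ =>
        ‖(u p.1 * Complex.exp (-Complex.I * (p.1 : ℂ) * (t : ℂ))) * (w t) ^ (p.2 + 1)‖ :=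
      Summable.mul_norm (f := fun k : ℤ => u k * Complex.exp (-Complex.I * (k : ℂ) * (t : ℂ)))
        (g := fun n : ℕ => (w t) ^ (n + 1))
        (by simpa only [norm_term] using hu)
        (by simpa only [norm_pow, hwnorm] using hgs)
    have := HasSum.mul (hasSum_df u hu t) (hG t) (Summable.of_norm h2)
    exact this
  have hpi : -Real.pi ≤ Real.pi := by linarith [Real.pi_pos]
  -- integrability
  have hFcont : ∀ p : ℤ × ℕ, Continuous (F p) := by
    intro p
    apply Continuous.mul
    · exact continuous_const.mul (Complex.continuous_exp.comp (by fun_prop))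
    · exact Continuous.pow (continuous_const.mul (Complex.continuous_exp.comp (by fun_prop))) _
  have hFint : ∀ p : ℤ × ℕ, Integrable (F p) (volume.restrict (Set.Ioc (-Real.pi) Real.pi)) :=
    fun p => (hFcont p).integrableOn_Ioc
  have hvol : (volume (Set.Ioc (-Real.pi) Real.pi)).toReal = 2 * Real.pi := by
    rw [Real.volume_Ioc, ENNReal.toReal_ofReal (by linarith [Real.pi_pos])]
    ring
  have hFintnorm : ∀ p : ℤ × ℕ,
      (∫ t, ‖F p t‖ ∂(volume.restrict (Set.Ioc (-Real.pi) Real.pi)))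
        = (2 * Real.pi) * (‖u p.1‖ * r ^ (p.2 + 1)) := by
    intro p
    rw [show (fun t => ‖F p t‖) = fun _ : ℝ => ‖u p.1‖ * r ^ (p.2 + 1) from
      funext fun t => hFnorm p t]
    rw [integral_const, measureReal_restrict_apply_univ, measureReal_def, hvol, smul_eq_mul]
  have hsumnorm : Summable fun p : ℤ × ℕ =>
      ∫ t, ‖F p t‖ ∂(volume.restrict (Set.Ioc (-Real.pi) Real.pi)) := by
    apply Summable.congr _ (fun p => (hFintnorm p).symm)
    exact (Summable.mul_of_nonneg hu hgs (fun _ => norm_nonneg _)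
      (fun n => pow_nonneg hr0.le _)).mul_left _
  have hInt := MeasureTheory.hasSum_integral_of_summable_integral_norm hFint hsumnorm
  have htsum_eq : ∀ t : ℝ, (∑' p : ℤ × ℕ, F p t) = discreteFourier u t * G t :=
    fun t => (hptwise t).tsum_eq
  simp only [htsum_eq] at hInt
  -- compute each integral
  have hIval : ∀ p : ℤ × ℕ,
      (∫ t, F p t ∂(volume.restrict (Set.Ioc (-Real.pi) Real.pi)))
        = if p.1 = -((p.2 : ℤ) + 1) then
            (2 * (Real.pi : ℂ)) * (u p.1 * (r : ℂ) ^ (p.2 + 1) *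
              Complex.exp (Complex.I * ((p.2 : ℂ) + 1) * (ξ : ℂ)))
          else 0 := by
    rintro ⟨k, n⟩
    have hF_eq : ∀ t : ℝ, F (k, n) t
        = (u k * (r : ℂ) ^ (n + 1) * Complex.exp (Complex.I * ((n : ℂ) + 1) * (ξ : ℂ))) *
          Complex.exp (Complex.I * ((-(k + (n : ℤ) + 1) : ℤ) : ℂ) * (t : ℂ)) := by
      intro t
      show (u k * Complex.exp (-Complex.I * (k : ℂ) * (t : ℂ))) *
        ((r : ℂ) * Complex.exp (Complex.I * ((ξ : ℂ) - (t : ℂ)))) ^ (n + 1) = _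
      rw [mul_pow, ← Complex.exp_nat_mul]
      rw [show (u k * Complex.exp (-Complex.I * (k : ℂ) * (t : ℂ))) *
          ((r : ℂ) ^ (n + 1) * Complex.exp ((((n + 1 : ℕ)) : ℂ) * (Complex.I * ((ξ : ℂ) - (t : ℂ)))))
          = (u k * (r : ℂ) ^ (n + 1)) *
            (Complex.exp (-Complex.I * (k : ℂ) * (t : ℂ)) *
             Complex.exp ((((n + 1 : ℕ)) : ℂ) * (Complex.I * ((ξ : ℂ) - (t : ℂ))))) by ring,
        ← Complex.exp_add]
      rw [show (u k * (r : ℂ) ^ (n + 1) * Complex.exp (Complex.I * ((n : ℂ) + 1) * (ξ : ℂ))) *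
          Complex.exp (Complex.I * ((-(k + (n : ℤ) + 1) : ℤ) : ℂ) * (t : ℂ))
          = (u k * (r : ℂ) ^ (n + 1)) *
            (Complex.exp (Complex.I * ((n : ℂ) + 1) * (ξ : ℂ)) *
             Complex.exp (Complex.I * ((-(k + (n : ℤ) + 1) : ℤ) : ℂ) * (t : ℂ))) by ring,
        ← Complex.exp_add]
      congr 1
      push_cast
      ring
    rw [show (∫ t, F (k, n) t ∂(volume.restrict (Set.Ioc (-Real.pi) Real.pi)))
        = ∫ t in (-Real.pi)..Real.pi, F (k, n) t from
      (intervalIntegral.integral_of_le hpi).symm]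
    simp only [hF_eq]
    rw [intervalIntegral.integral_const_mul, my_integral_exp_int]
    by_cases hk : k = -((n : ℤ) + 1)
    · rw [if_pos (by omega), if_pos hk]
      ring
    · rw [if_neg (by omega), if_neg hk, mul_zero]
  -- reindex to the diagonal
  set e : ℕ → ℤ × ℕ := fun n => (-((n : ℤ) + 1), n) with he
  have hinj : Function.Injective e := by
    intro a b hab
    have := congrArg Prod.snd hab
    simpa [he] using this
  have hsupp : ∀ p : ℤ × ℕ, p ∉ Set.range e →
      (∫ t, F p t ∂(volume.restrict (Set.Ioc (-Real.pi) Real.pi))) = 0 := by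
    rintro ⟨k, n⟩ hp
    rw [hIval]
    rw [if_neg]
    intro hk
    simp only at hk
    exact hp ⟨n, by simp [he, Prod.ext_iff]; omega⟩
  have h5 := (Function.Injective.hasSum_iff hinj hsupp).mpr hInt
  have h5' : HasSum (fun n : ℕ => (2 * (Real.pi : ℂ)) *
      ((Real.exp (-τ) : ℂ) ^ (n + 1) *
        (u (-((n : ℤ) + 1)) * Complex.exp (-Complex.I * ((-((n : ℤ) + 1) : ℤ) : ℂ) * (ξ : ℂ)))))
      (∫ t, discreteFourier u t * G t ∂(volume.restrict (Set.Ioc (-Real.pi) Real.pi))) := by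
    apply h5.congr_fun
    intro n
    rw [Function.comp_apply, hIval (e n)]
    rw [if_pos (by simp [he])]
    have hexp : Complex.exp (-Complex.I * ((-((n : ℤ) + 1) : ℤ) : ℂ) * (ξ : ℂ))
        = Complex.exp (Complex.I * ((n : ℂ) + 1) * (ξ : ℂ)) := by
      congr 1
      push_cast
      ring
    rw [hexp]
    simp only [he]
    ring
  have h2pi : (2 * (Real.pi : ℂ)) ≠ 0 := by
    simp [Complex.ofReal_ne_zero, Real.pi_ne_zero]
  have hfinal : (∫ t in (-Real.pi)..Real.pi, discreteFourier u t * G t)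
      = (2 * (Real.pi : ℂ)) * ∑' n : ℕ, ((Real.exp (-τ) : ℂ)) ^ (n + 1) *
          (u (-((n : ℤ) + 1)) * Complex.exp (-Complex.I * ((-((n : ℤ) + 1) : ℤ) : ℂ) * (ξ : ℂ))) := by
    rw [intervalIntegral.integral_of_le hpi]
    rw [← h5'.tsum_eq, tsum_mul_left]
  calc (1 / (2 * (Real.pi : ℂ))) *
        ∫ t in (-Real.pi)..Real.pi, discreteFourier u t *
          ((1 - (Real.exp (-τ) : ℂ) * Complex.exp (Complex.I * ((ξ : ℂ) - (t : ℂ))))⁻¹ - 1)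
      = (1 / (2 * (Real.pi : ℂ))) * ∫ t in (-Real.pi)..Real.pi, discreteFourier u t * G t := rfl
    _ = ∑' n : ℕ, ((Real.exp (-τ) : ℂ)) ^ (n + 1) *
          (u (-((n : ℤ) + 1)) * Complex.exp (-Complex.I * ((-((n : ℤ) + 1) : ℤ) : ℂ) * (ξ : ℂ))) := by
        rw [hfinal, ← mul_assoc, one_div, inv_mul_cancel₀ h2pi, one_mul]

theorem sokhotskii_limit_Zminus (u : ℤ → ℂ)
    (hu : Summable fun k : ℤ => ‖u k‖) (ξ : ℝ) :
    Filter.Tendsto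
      (fun τ : ℝ => (1 / (2 * (Real.pi : ℂ))) *
        ∫ t in (-Real.pi)..Real.pi, discreteFourier u t *
          ((1 - (Real.exp (-τ) : ℂ) * Complex.exp (Complex.I * ((ξ : ℂ) - (t : ℂ))))⁻¹ - 1))
      (nhdsWithin 0 (Set.Ioi 0))
      (nhds (∑' k : {k : ℤ // k < 0},
        u k.1 * Complex.exp (-Complex.I * (k.1 : ℂ) * (ξ : ℂ)))) := by
  set g : ℕ → ℂ := fun n =>
    u (-((n : ℤ) + 1)) * Complex.exp (-Complex.I * ((-((n : ℤ) + 1) : ℤ) : ℂ) * (ξ : ℂ)) with hg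
  -- reindex the target sum over ℕ
  have heqv : (∑' k : {k : ℤ // k < 0}, u k.1 * Complex.exp (-Complex.I * (k.1 : ℂ) * (ξ : ℂ)))
      = ∑' n : ℕ, g n := by
    let eqv : ℕ ≃ {k : ℤ // k < 0} :=
      { toFun := fun n => ⟨-((n : ℤ) + 1), by omega⟩
        invFun := fun k => (-(k.1 + 1)).toNat
        left_inv := fun n => by simp
        right_inv := fun k => by
          ext
          have := k.2
          simp
          omega }
    rw [← Equiv.tsum_eq eqv (fun k => u k.1 * Complex.exp (-Complex.I * (k.1 : ℂ) * (ξ : ℂ)))]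
    rfl
  rw [heqv]
  have hmain : Filter.Tendsto
      (fun τ : ℝ => ∑' n : ℕ, ((Real.exp (-τ) : ℂ)) ^ (n + 1) * g n)
      (nhdsWithin 0 (Set.Ioi 0)) (nhds (∑' n : ℕ, g n)) := by
    apply tendsto_tsum_of_dominated_convergence (bound := fun n : ℕ => ‖u (-((n : ℤ) + 1))‖)
    · exact hu.comp_injective (fun a b hab => by omega)
    · intro n
      have hc : Continuous fun τ : ℝ => ((Real.exp (-τ) : ℂ)) ^ (n + 1) * g n := by
        fun_prop
      have := (hc.tendsto 0).mono_left (nhdsWithin_le_nhds (s := Set.Ioi (0:ℝ)))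
      simpa using this
    · filter_upwards [self_mem_nhdsWithin] with τ (hτ : 0 < τ)
      intro n
      have h1 : Real.exp (-τ) ≤ 1 := Real.exp_le_one_iff.mpr (by linarith)
      have hgnorm : ‖g n‖ = ‖u (-((n : ℤ) + 1))‖ := by
        rw [hg]
        simp only [norm_mul, norm_exp_I_int, mul_one]
      rw [norm_mul, hgnorm, norm_pow, Complex.norm_real,
        Real.norm_of_nonneg (Real.exp_pos _).le]
      calc Real.exp (-τ) ^ (n + 1) * ‖u (-((n : ℤ) + 1))‖
          ≤ 1 * ‖u (-((n : ℤ) + 1))‖ := by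
            apply mul_le_mul_of_nonneg_right _ (norm_nonneg _)
            exact pow_le_one₀ (Real.exp_pos _).le h1
        _ = ‖u (-((n : ℤ) + 1))‖ := one_mul _
  apply hmain.congr'
  filter_upwards [self_mem_nhdsWithin] with τ (hτ : 0 < τ)
  exact (step_lemma u hu ξ τ hτ).symm
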